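/- Fix an integer k ≥ 1. As x → ∞, ∑_{Ω(n)=k, P⁺(n)≤x} 1/n = ∑_{j=0}^{k} (c_{k-j}/j!) (log log x + β)^j + O_k((log log x)^{k-1} / log x), where β is Mertens' constant and c_m is defined by c₀ = 1, c_m = (1/m) ∑_{j=2}^{m} c_{m-j} Z(j). -/

import Mathlib

open Filter Real Asymptotics
open scoped Classical Topology BigOperators

/-- The finite set of primes `p ≤ x`, for a real number `x`. -/
noncomputable def primesUpTo (x : ℝ) : Finset ℕ :=
  (Finset.range (⌊x⌋₊ + 1)).filter Nat.Prime

/-- `n` is `x`-smooth: `n` is a positive integer all of whose prime factors are `≤ x`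
(equivalently, `P⁺(n) ≤ x`). -/
def IsSmooth (x : ℝ) (n : ℕ) : Prop := 0 < n ∧ ∀ p ∈ n.primeFactors, (p : ℝ) ≤ x

/-- `Ω n`: number of prime factors of `n` counted with multiplicity. -/
def bigOmega (n : ℕ) : ℕ := n.primeFactorsList.length

/-- Truncated prime zeta function `Z(t, x) = ∑_{p ≤ x} p^{-t}`. -/
noncomputable def Ztr (t x : ℝ) : ℝ := ∑ p ∈ primesUpTo x, (p : ℝ) ^ (-t)

/-- Prime zeta function `Z(j) = ∑_p p^{-j}`. -/
noncomputable def Zp (j : ℕ) : ℝ := ∑' p : Nat.Primes, (1 : ℝ) / ((p : ℕ) : ℝ) ^ j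

namespace DM

noncomputable def A (x : ℝ) (k : ℕ) : Finset ℕ :=
  (Finset.range ((⌊x⌋₊ + 1) ^ k + 1)).filter (fun n => IsSmooth x n ∧ bigOmega n = k)

lemma mem_A {x : ℝ} {k n : ℕ} : n ∈ A x k ↔ IsSmooth x n ∧ bigOmega n = k := by
  constructor
  · exact fun h => (Finset.mem_filter.mp h).2
  · intro h
    refine Finset.mem_filter.mpr ⟨Finset.mem_range.mpr ?_, h⟩
    have hn0 : n ≠ 0 := h.1.1.ne'
    have hb : ∀ p ∈ n.primeFactorsList, p ≤ ⌊x⌋₊ + 1 := by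
      intro p hp
      have hpf : p ∈ n.primeFactors := Nat.mem_primeFactors.mpr
        ⟨Nat.prime_of_mem_primeFactorsList hp, Nat.dvd_of_mem_primeFactorsList hp, hn0⟩
      have := h.1.2 p hpf
      exact le_trans (Nat.le_floor this) (Nat.le_succ _)
    have := List.prod_le_pow_card n.primeFactorsList (⌊x⌋₊ + 1) hb
    rw [Nat.prod_primeFactorsList hn0] at this
    have hk : n.primeFactorsList.length = k := h.2
    rw [hk] at this
    omega

lemma tsum_eq_S (x : ℝ) (k : ℕ) :
    (∑' n : ℕ, if IsSmooth x n ∧ bigOmega n = k then (1 : ℝ) / n else 0)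
      = ∑ n ∈ A x k, (1 : ℝ) / n := by
  rw [tsum_eq_sum (s := A x k) (fun n hn => by
    rw [if_neg (fun h => hn (mem_A.mpr h))])]
  exact Finset.sum_congr rfl fun n hn => if_pos (mem_A.mp hn)

noncomputable def S (x : ℝ) (k : ℕ) : ℝ := ∑ n ∈ A x k, (1 : ℝ) / n

lemma tsum_S (x : ℝ) (k : ℕ) :
    (∑' n : ℕ, if IsSmooth x n ∧ bigOmega n = k then (1 : ℝ) / n else 0) = S x k :=
  tsum_eq_S x k

lemma A_zero (x : ℝ) : A x 0 = {1} := by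
  ext n
  simp only [mem_A, Finset.mem_singleton]
  constructor
  · rintro ⟨⟨hn, _⟩, h0⟩
    have := (Nat.primeFactorsList_eq_nil n).mp (List.length_eq_zero_iff.mp h0)
    omega
  · rintro rfl
    exact ⟨⟨one_pos, by simp⟩, by simp [bigOmega]⟩

lemma S_zero (x : ℝ) : S x 0 = 1 := by simp [S, A_zero]

lemma bigOmega_eq (n : ℕ) : bigOmega n = ∑ p ∈ n.primeFactors, n.factorization p := by
  have h : n.primeFactors = (↑n.primeFactorsList : Multiset ℕ).toFinset := rfl
  rw [h]
  have := Multiset.toFinset_sum_count_eq (↑n.primeFactorsList : Multiset ℕ)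
  rw [show bigOmega n = Multiset.card (↑n.primeFactorsList : Multiset ℕ) from (Multiset.coe_card _).symm, ← this]
  refine Finset.sum_congr rfl fun p _ => ?_
  rw [Multiset.coe_count, Nat.primeFactorsList_count_eq]

lemma bigOmega_mul {m n : ℕ} (hm : m ≠ 0) (hn : n ≠ 0) :
    bigOmega (m * n) = bigOmega m + bigOmega n := by
  have := ArithmeticFunction.cardFactors_mul hm hn
  simpa [ArithmeticFunction.cardFactors_apply, bigOmega] using this

lemma bigOmega_pp {p : ℕ} (hp : p.Prime) (i : ℕ) : bigOmega (p ^ i) = i := by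
  have := ArithmeticFunction.cardFactors_apply_prime_pow (k := i) hp
  simpa [ArithmeticFunction.cardFactors_apply, bigOmega] using this

lemma mem_primesUpTo {x : ℝ} {p : ℕ} :
    p ∈ primesUpTo x ↔ p.Prime ∧ (p : ℝ) ≤ x := by
  simp only [primesUpTo, Finset.mem_filter, Finset.mem_range, Nat.lt_succ_iff]
  constructor
  · rintro ⟨hle, hp⟩
    have hx : 0 ≤ x := by
      by_contra h
      push_neg at h
      rw [Nat.floor_of_nonpos h.le] at hle
      have := hp.two_le; omega
    exact ⟨hp, le_trans (by exact_mod_cast hle) (Nat.floor_le hx)⟩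
  · rintro ⟨hp, hle⟩
    exact ⟨Nat.le_floor hle, hp⟩

lemma S_rec (x : ℝ) {k : ℕ} (hk : 1 ≤ k) :
    (k : ℝ) * S x k = ∑ i ∈ Finset.Icc 1 k, Ztr i x * S x (k - i) := by
  have step1 : (k : ℝ) * S x k
      = ∑ n ∈ A x k, ∑ p ∈ primesUpTo x, ∑ i ∈ Finset.Icc 1 k,
          (if p ^ i ∣ n then (1 : ℝ) / n else 0) := by
    rw [S, Finset.mul_sum]
    refine Finset.sum_congr rfl fun n hn => ?_
    obtain ⟨hsm, hΩ⟩ := mem_A.mp hn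
    have hn0 : n ≠ 0 := hsm.1.ne'
    -- extend from primeFactors to primesUpTo
    have hsub : n.primeFactors ⊆ primesUpTo x := fun p hp =>
      mem_primesUpTo.mpr ⟨Nat.prime_of_mem_primeFactors hp, hsm.2 p hp⟩
    have hOm : (k : ℝ) = ∑ p ∈ primesUpTo x, (n.factorization p : ℝ) := by
      rw [← hΩ, bigOmega_eq]
      push_cast
      exact Finset.sum_subset hsub (fun p _ hp => by
        exact_mod_cast congrArg (Nat.cast (R := ℝ))
          (Finsupp.notMem_support_iff.mp (by rwa [Nat.support_factorization])))
    rw [hOm, Finset.sum_mul]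
    refine Finset.sum_congr rfl fun p hp => ?_
    have hpp : p.Prime := (mem_primesUpTo.mp hp).1
    have hvk : n.factorization p ≤ k := by
      by_cases hps : p ∈ n.primeFactors
      · rw [← hΩ, bigOmega_eq]
        exact Finset.single_le_sum (f := fun q => n.factorization q)
          (fun q _ => Nat.zero_le _) hps
      · rw [Finsupp.notMem_support_iff.mp (by rwa [Nat.support_factorization])]
        exact Nat.zero_le _
    have hfilter : (Finset.Icc 1 k).filter (fun i => p ^ i ∣ n)
        = Finset.Icc 1 (n.factorization p) := by
      ext i
      simp only [Finset.mem_filter, Finset.mem_Icc,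
        Nat.Prime.pow_dvd_iff_le_factorization hpp hn0]
      omega
    rw [Finset.sum_ite, Finset.sum_const_zero, add_zero, hfilter, Finset.sum_const,
      Nat.card_Icc]
    simp [nsmul_eq_mul, div_eq_mul_inv]
  have step2 : ∀ p ∈ primesUpTo x, ∀ i ∈ Finset.Icc 1 k,
      (∑ n ∈ A x k, if p ^ i ∣ n then (1 : ℝ) / n else 0)
        = (p : ℝ) ^ (-(i : ℝ)) * S x (k - i) := by
    intro p hp i hi
    obtain ⟨hpp, hpx⟩ := mem_primesUpTo.mp hp
    obtain ⟨hi1, hik⟩ := Finset.mem_Icc.mp hi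
    have hp0 : (0 : ℝ) < (p : ℝ) := by exact_mod_cast hpp.pos
    have hpi0 : p ^ i ≠ 0 := pow_ne_zero _ hpp.pos.ne'
    have key : (∑ n ∈ (A x k).filter (fun n => p ^ i ∣ n), (1 : ℝ) / n)
        = ∑ m ∈ A x (k - i), (1 : ℝ) / (p ^ i * m : ℕ) := by
      refine Finset.sum_nbij' (fun n => n / p ^ i) (fun m => p ^ i * m) ?_ ?_ ?_ ?_ ?_
      · intro n hn
        obtain ⟨hnA, hdvd⟩ := Finset.mem_filter.mp hn
        obtain ⟨hsm, hΩ⟩ := mem_A.mp hnA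
        have hn0 : n ≠ 0 := hsm.1.ne'
        have hm0 : n / p ^ i ≠ 0 := fun h => hn0 (by
          rw [← Nat.mul_div_cancel' hdvd, h, mul_zero])
        have heq : p ^ i * (n / p ^ i) = n := Nat.mul_div_cancel' hdvd
        refine mem_A.mpr ⟨⟨Nat.pos_of_ne_zero hm0, fun q hq => hsm.2 q ?_⟩, ?_⟩
        · exact Nat.primeFactors_mono (Nat.div_dvd_of_dvd hdvd) hn0 hq
        · show bigOmega (n / p ^ i) = k - i
          have := bigOmega_mul (m := p ^ i) (n := n / p ^ i) hpi0 hm0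
          rw [heq, hΩ, bigOmega_pp hpp] at this
          omega
      · intro m hm
        obtain ⟨hsm, hΩ⟩ := mem_A.mp hm
        have hm0 : m ≠ 0 := hsm.1.ne'
        refine Finset.mem_filter.mpr ⟨mem_A.mpr ⟨⟨?_, fun q hq => ?_⟩, ?_⟩,
          Dvd.intro m rfl⟩
        · positivity
        · rw [Nat.primeFactors_mul hpi0 hm0, Finset.mem_union] at hq
          rcases hq with hq | hq
          · have hqp : q = p := by
              have hq' := Nat.prime_of_mem_primeFactors hq
              exact (Nat.prime_dvd_prime_iff_eq hq' hpp).mp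
                (hq'.dvd_of_dvd_pow (Nat.dvd_of_mem_primeFactors hq))
            rw [hqp]; exact hpx
          · exact hsm.2 q hq
        · show bigOmega (p ^ i * m) = k
          rw [bigOmega_mul hpi0 hm0, bigOmega_pp hpp, hΩ]
          omega
      · intro n hn
        exact Nat.mul_div_cancel' (Finset.mem_filter.mp hn).2
      · intro m hm
        exact Nat.mul_div_cancel_left _ (Nat.pos_of_ne_zero hpi0)
      · intro n hn
        rw [Nat.mul_div_cancel' (Finset.mem_filter.mp hn).2]
    calc (∑ n ∈ A x k, if p ^ i ∣ n then (1 : ℝ) / n else 0)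
        = ∑ n ∈ (A x k).filter (fun n => p ^ i ∣ n), (1 : ℝ) / n := by
          rw [Finset.sum_ite, Finset.sum_const_zero, add_zero]
      _ = ∑ m ∈ A x (k - i), (1 : ℝ) / (p ^ i * m : ℕ) := key
      _ = (p : ℝ) ^ (-(i : ℝ)) * S x (k - i) := by
          rw [S, Finset.mul_sum]
          refine Finset.sum_congr rfl fun m hm => ?_
          rw [Real.rpow_neg hp0.le, Real.rpow_natCast]
          push_cast
          simp [one_div, mul_inv, mul_comm]
  rw [step1, Finset.sum_comm]
  rw [show (∑ p ∈ primesUpTo x, ∑ n ∈ A x k, ∑ i ∈ Finset.Icc 1 k,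
        (if p ^ i ∣ n then (1 : ℝ) / n else 0))
      = ∑ p ∈ primesUpTo x, ∑ i ∈ Finset.Icc 1 k, ∑ n ∈ A x k,
        (if p ^ i ∣ n then (1 : ℝ) / n else 0) from
    Finset.sum_congr rfl fun p _ => Finset.sum_comm]
  rw [Finset.sum_comm]
  refine Finset.sum_congr rfl fun i hi => ?_
  rw [Finset.sum_congr rfl (fun p hp => step2 p hp i hi), Ztr, ← Finset.sum_mul]


noncomputable def cx (x : ℝ) : ℕ → ℝ
  | 0 => 1
  | (m+1) => (1 / (m+1 : ℝ)) *
      ∑ j ∈ (Finset.Icc 2 (m+1)).attach, cx x (m+1-(j : ℕ)) * Ztr (j : ℕ) x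
  decreasing_by
    have := Finset.mem_Icc.mp j.2
    omega

lemma cx_zero (x : ℝ) : cx x 0 = 1 := by simp [cx]

lemma cx_id (x : ℝ) (m : ℕ) :
    (m : ℝ) * cx x m = ∑ i ∈ Finset.Icc 2 m, cx x (m - i) * Ztr i x := by
  cases m with
  | zero => simp
  | succ M =>
    rw [cx, ← Finset.sum_attach (Finset.Icc 2 (M+1))
      (fun i => cx x (M+1-i) * Ztr i x), ← mul_assoc]
    have h : ((M+1 : ℕ) : ℝ) * (1 / ((M:ℝ)+1)) = 1 := by
      push_cast; field_simp
    push_cast at h ⊢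
    rw [h, one_mul]

lemma S_eq_poly (x : ℝ) : ∀ k, S x k
    = ∑ j ∈ Finset.range (k+1), cx x (k-j) / (Nat.factorial j : ℝ) * Ztr 1 x ^ j := by
  intro k
  induction k using Nat.strong_induction_on with
  | _ k IH =>
  match k with
  | 0 => simp [S_zero, cx_zero]
  | (K+1) =>
    have hrec := S_rec x (k := K+1) (Nat.le_add_left 1 K)
    have hsplit : Finset.Icc 1 (K+1) = insert 1 (Finset.Icc 2 (K+1)) := by
      ext j; simp only [Finset.mem_Icc, Finset.mem_insert]; omega
    rw [hsplit, Finset.sum_insert (by simp)] at hrec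
    have h1 : (K + 1 - 1 : ℕ) = K := by omega
    rw [h1] at hrec
    push_cast at hrec
    set P := Ztr 1 x with hP
    rw [IH K (by omega)] at hrec
    rw [show (∑ i ∈ Finset.Icc 2 (K+1), Ztr (i : ℝ) x * S x (K+1-i))
        = ∑ i ∈ Finset.Icc 2 (K+1), Ztr (i : ℝ) x *
            ∑ j ∈ Finset.range (K+1-i+1), cx x (K+1-i-j) / (Nat.factorial j : ℝ) * P ^ j from
      Finset.sum_congr rfl fun i hi => by
        rw [IH (K+1-i) (by have := (Finset.mem_Icc.mp hi).1; omega)]] at hrec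
    have key : P * (∑ j ∈ Finset.range (K+1), cx x (K-j) / (Nat.factorial j : ℝ) * P ^ j)
        + (∑ i ∈ Finset.Icc 2 (K+1), Ztr (i : ℝ) x *
            ∑ j ∈ Finset.range (K+1-i+1), cx x (K+1-i-j) / (Nat.factorial j : ℝ) * P ^ j)
        = ((K:ℝ)+1) * ∑ j ∈ Finset.range (K+1+1),
            cx x (K+1-j) / (Nat.factorial j : ℝ) * P ^ j := by
      have hsplitc : ∀ j ∈ Finset.range (K+1+1),
          ((K:ℝ)+1) * (cx x (K+1-j) / (Nat.factorial j : ℝ) * P ^ j)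
          = ((K+1-j : ℕ) : ℝ) * cx x (K+1-j) / (Nat.factorial j : ℝ) * P ^ j
            + (j : ℝ) * (cx x (K+1-j) / (Nat.factorial j : ℝ) * P ^ j) := by
        intro j hj
        have hj' : j ≤ K + 1 := by
          have := Finset.mem_range.mp hj; omega
        have h : ((K+1-j : ℕ) : ℝ) = (K:ℝ) + 1 - (j:ℝ) := by
          push_cast [hj']; ring
        rw [h]; ring
      conv_rhs => rw [Finset.mul_sum, Finset.sum_congr rfl hsplitc, Finset.sum_add_distrib]
      have hR1 : ∑ j ∈ Finset.range (K+1+1),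
          ((K+1-j : ℕ) : ℝ) * cx x (K+1-j) / (Nat.factorial j : ℝ) * P ^ j
          = ∑ i ∈ Finset.Icc 2 (K+1), Ztr (i : ℝ) x *
            ∑ j ∈ Finset.range (K+1-i+1), cx x (K+1-i-j) / (Nat.factorial j : ℝ) * P ^ j := by
        have step : ∀ j ∈ Finset.range (K+1+1),
            ((K+1-j : ℕ) : ℝ) * cx x (K+1-j) / (Nat.factorial j : ℝ) * P ^ j
            = ∑ i ∈ Finset.Icc 2 (K+1-j),
                cx x (K+1-j-i) * Ztr (i : ℝ) x / (Nat.factorial j : ℝ) * P ^ j := by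
          intro j _
          rw [cx_id x (K+1-j), Finset.sum_div, Finset.sum_mul]
        rw [Finset.sum_congr rfl step,
          Finset.sum_comm' (t' := Finset.Icc 2 (K+1))
            (s' := fun i => Finset.range (K+1-i+1)) (by
              intro j i
              simp only [Finset.mem_range, Finset.mem_Icc]
              omega)]
        refine Finset.sum_congr rfl fun i hi => ?_
        rw [Finset.mul_sum]
        refine Finset.sum_congr rfl fun j hj => ?_
        have h : K+1-j-i = K+1-i-j := by omega
        rw [h]; ring
      have hR2 : ∑ j ∈ Finset.range (K+1+1),
          (j : ℝ) * (cx x (K+1-j) / (Nat.factorial j : ℝ) * P ^ j)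
          = P * ∑ j ∈ Finset.range (K+1),
              cx x (K-j) / (Nat.factorial j : ℝ) * P ^ j := by
        rw [Finset.sum_range_succ'
          (fun j => (j : ℝ) * (cx x (K+1-j) / (Nat.factorial j : ℝ) * P ^ j))]
        simp only [Nat.cast_zero, zero_mul, add_zero]
        rw [Finset.mul_sum]
        refine Finset.sum_congr rfl fun j hj => ?_
        have h1 : (K+1-(j+1) : ℕ) = K - j := by omega
        have h2 : (Nat.factorial (j+1) : ℝ) = ((j:ℝ)+1) * (Nat.factorial j : ℝ) := by
          rw [Nat.factorial_succ]; push_cast; ring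
        have hf : (Nat.factorial j : ℝ) ≠ 0 := Nat.cast_ne_zero.mpr (Nat.factorial_ne_zero j)
        have hj1 : ((j:ℝ)+1) ≠ 0 := by positivity
        rw [h1, h2, pow_succ]
        push_cast
        field_simp
      rw [hR1, hR2]
      ring
    rw [key] at hrec
    have hne : ((K:ℝ)+1) ≠ 0 := by positivity
    exact mul_left_cancel₀ hne hrec

noncomputable def C32 : ℝ := ∑' p : Nat.Primes, ((p : ℕ) : ℝ) ^ (-(3/2) : ℝ)

lemma summable32 : Summable (fun p : Nat.Primes => ((p : ℕ) : ℝ) ^ (-(3/2) : ℝ)) :=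
  Nat.Primes.summable_rpow.mpr (by norm_num)

lemma C32_nonneg : 0 ≤ C32 :=
  tsum_nonneg fun p => Real.rpow_nonneg (Nat.cast_nonneg _) _

lemma summable_fj {j : ℕ} (hj : 2 ≤ j) :
    Summable (fun p : Nat.Primes => (1 : ℝ) / ((p : ℕ) : ℝ) ^ j) := by
  have h := Nat.Primes.summable_rpow.mpr (show (-(j:ℝ)) < -1 by
    have : (2:ℝ) ≤ (j:ℝ) := by exact_mod_cast hj
    linarith)
  refine h.congr fun p => ?_
  have hp0 : (0:ℝ) < ((p : ℕ) : ℝ) := by exact_mod_cast p.2.pos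
  rw [Real.rpow_neg hp0.le, Real.rpow_natCast, one_div]

noncomputable def pFin (x : ℝ) : Finset Nat.Primes :=
  (primesUpTo x).attach.map
    ⟨fun p => ⟨p.1, (mem_primesUpTo.mp p.2).1⟩,
     by intro a b h
        have := congrArg (fun q : Nat.Primes => (q : ℕ)) h
        exact Subtype.ext this⟩

lemma mem_pFin {x : ℝ} {q : Nat.Primes} : q ∈ pFin x ↔ (q : ℕ) ∈ primesUpTo x := by
  simp only [pFin, Finset.mem_map, Finset.mem_attach, true_and,
    Function.Embedding.coeFn_mk]
  constructor
  · rintro ⟨a, rfl⟩; exact a.2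
  · intro h; exact ⟨⟨(q : ℕ), h⟩, Subtype.ext rfl⟩

lemma Ztr_nat_eq (j : ℕ) (x : ℝ) :
    Ztr j x = ∑ q ∈ pFin x, (1 : ℝ) / ((q : ℕ) : ℝ) ^ j := by
  rw [pFin, Finset.sum_map, Ztr,
    ← Finset.sum_attach (primesUpTo x) (fun p => (p : ℝ) ^ (-(j:ℝ)))]
  refine Finset.sum_congr rfl fun p _ => ?_
  have hp0 : (0:ℝ) < (p.1 : ℝ) := by exact_mod_cast (mem_primesUpTo.mp p.2).1.pos
  rw [Real.rpow_neg hp0.le, Real.rpow_natCast, one_div]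
  rfl

lemma Ztr_nonneg (t x : ℝ) : 0 ≤ Ztr t x :=
  Finset.sum_nonneg fun p _ => Real.rpow_nonneg (Nat.cast_nonneg _) _

lemma Zp2_nonneg : 0 ≤ Zp 2 := tsum_nonneg fun p => by positivity

lemma Ztr_le_Zp2 {j : ℕ} (hj : 2 ≤ j) (x : ℝ) : Ztr j x ≤ Zp 2 := by
  rw [Ztr_nat_eq j x]
  calc ∑ q ∈ pFin x, (1 : ℝ) / ((q : ℕ) : ℝ) ^ j
      ≤ ∑ q ∈ pFin x, (1 : ℝ) / ((q : ℕ) : ℝ) ^ 2 := by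
        refine Finset.sum_le_sum fun q _ => ?_
        have h1 : (1:ℝ) ≤ ((q : ℕ) : ℝ) := by exact_mod_cast q.2.one_lt.le
        have := pow_le_pow_right₀ h1 hj
        exact one_div_le_one_div_of_le (by positivity) this
    _ ≤ Zp 2 := (summable_fj le_rfl).sum_le_tsum _ (fun q _ => by positivity)

lemma Ztr_sub_Zp {j : ℕ} (hj : 2 ≤ j) {x : ℝ} (hx : 1 ≤ x) :
    |Ztr j x - Zp j| ≤ C32 / Real.sqrt x := by
  have hx0 : (0:ℝ) < x := lt_of_lt_of_le one_pos hx
  have hsx : (0:ℝ) < Real.sqrt x := Real.sqrt_pos.mpr hx0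
  have hsum := summable_fj hj
  have hcompl := Summable.sum_add_tsum_compl (s := pFin x) hsum
  have hdiff : Zp j - Ztr j x
      = ∑' (q : ↥((pFin x : Set Nat.Primes)ᶜ)), (1 : ℝ) / (((q : Nat.Primes) : ℕ) : ℝ) ^ j := by
    rw [Ztr_nat_eq j x]
    unfold Zp
    rw [← hcompl]
    ring
  have hnn : 0 ≤ Zp j - Ztr j x := by
    rw [hdiff]; exact tsum_nonneg fun q => by positivity
  rw [abs_sub_comm, abs_of_nonneg hnn, hdiff]
  have hbound : ∀ (q : ↥((pFin x : Set Nat.Primes)ᶜ)),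
      (1 : ℝ) / (((q : Nat.Primes) : ℕ) : ℝ) ^ j
        ≤ (1 / Real.sqrt x) * ((((q : Nat.Primes) : ℕ) : ℝ) ^ (-(3/2) : ℝ)) := by
    intro q
    have hq : ((q : Nat.Primes) : ℕ) ∉ primesUpTo x := by
      have h' : (q : Nat.Primes) ∉ (pFin x : Set Nat.Primes) := q.2
      intro hmem
      exact h' (by exact mem_pFin.mpr hmem)
    have hqx : x < (((q : Nat.Primes) : ℕ) : ℝ) := by
      by_contra h
      push_neg at h
      exact hq (mem_primesUpTo.mpr ⟨(q : Nat.Primes).2, h⟩)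
    have hq1 : (1:ℝ) ≤ (((q : Nat.Primes) : ℕ) : ℝ) := le_trans hx hqx.le
    have hq0 : (0:ℝ) < (((q : Nat.Primes) : ℕ) : ℝ) := lt_of_lt_of_le one_pos hq1
    have e1 : (1 : ℝ) / (((q : Nat.Primes) : ℕ) : ℝ) ^ j = (((q : Nat.Primes) : ℕ) : ℝ) ^ (-(j:ℝ)) := by
      rw [Real.rpow_neg hq0.le, Real.rpow_natCast, one_div]
    have e2 : (((q : Nat.Primes) : ℕ) : ℝ) ^ (-(j:ℝ)) ≤ (((q : Nat.Primes) : ℕ) : ℝ) ^ (-(2:ℝ)) := by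
      apply Real.rpow_le_rpow_of_exponent_le hq1
      have : (2:ℝ) ≤ (j:ℝ) := by exact_mod_cast hj
      linarith
    have e3 : (((q : Nat.Primes) : ℕ) : ℝ) ^ (-(2:ℝ))
        = (((q : Nat.Primes) : ℕ) : ℝ) ^ (-(1/2):ℝ) * (((q : Nat.Primes) : ℕ) : ℝ) ^ (-(3/2):ℝ) := by
      rw [← Real.rpow_add hq0]; norm_num
    have e4 : (((q : Nat.Primes) : ℕ) : ℝ) ^ (-(1/2):ℝ) ≤ x ^ (-(1/2):ℝ) := by
      apply Real.rpow_le_rpow_of_nonpos hx0 hqx.le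
      norm_num
    have e5 : x ^ (-(1/2):ℝ) = 1 / Real.sqrt x := by
      rw [Real.rpow_neg hx0.le, Real.sqrt_eq_rpow, one_div]
      norm_num
    calc (1 : ℝ) / (((q : Nat.Primes) : ℕ) : ℝ) ^ j = (((q : Nat.Primes) : ℕ) : ℝ) ^ (-(j:ℝ)) := e1
      _ ≤ (((q : Nat.Primes) : ℕ) : ℝ) ^ (-(2:ℝ)) := e2
      _ = (((q : Nat.Primes) : ℕ) : ℝ) ^ (-(1/2):ℝ) * (((q : Nat.Primes) : ℕ) : ℝ) ^ (-(3/2):ℝ) := e3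
      _ ≤ x ^ (-(1/2):ℝ) * (((q : Nat.Primes) : ℕ) : ℝ) ^ (-(3/2):ℝ) := by
          have h32 : (0:ℝ) ≤ (((q : Nat.Primes) : ℕ) : ℝ) ^ (-(3/2):ℝ) := Real.rpow_nonneg hq0.le _
          exact mul_le_mul_of_nonneg_right e4 h32
      _ = (1 / Real.sqrt x) * ((((q : Nat.Primes) : ℕ) : ℝ) ^ (-(3/2) : ℝ)) := by rw [e5]
  calc (∑' (q : ↥((pFin x : Set Nat.Primes)ᶜ)), (1 : ℝ) / (((q : Nat.Primes) : ℕ) : ℝ) ^ j)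
      ≤ ∑' (q : ↥((pFin x : Set Nat.Primes)ᶜ)),
          (1 / Real.sqrt x) * ((((q : Nat.Primes) : ℕ) : ℝ) ^ (-(3/2) : ℝ)) :=
        Summable.tsum_le_tsum hbound (hsum.subtype _) ((summable32.subtype _).mul_left _)
    _ = (1 / Real.sqrt x) * ∑' (q : ↥((pFin x : Set Nat.Primes)ᶜ)),
          ((((q : Nat.Primes) : ℕ) : ℝ) ^ (-(3/2) : ℝ)) := tsum_mul_left
    _ ≤ (1 / Real.sqrt x) * C32 := by
        apply mul_le_mul_of_nonneg_left _ (by positivity)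
        exact Summable.tsum_subtype_le _ _ (fun p => Real.rpow_nonneg (Nat.cast_nonneg _) _) summable32
    _ = C32 / Real.sqrt x := by ring

lemma cx_c_bound (c : ℕ → ℝ) (hc0 : c 0 = 1)
    (hc : ∀ m, 1 ≤ m → c m = (1 / (m : ℝ)) * ∑ j ∈ Finset.Icc 2 m, c (m - j) * Zp j) :
    ∀ M : ℕ, ∃ C : ℝ, 0 ≤ C ∧ ∀ i ≤ M, ∀ x : ℝ, 1 ≤ x →
      |cx x i - c i| ≤ C / Real.sqrt x := by
  intro M
  induction M with
  | zero =>
    refine ⟨0, le_rfl, fun i hi x hx => ?_⟩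
    interval_cases i
    simp [cx_zero, hc0]
  | succ M IH =>
    obtain ⟨C, hC0, hC⟩ := IH
    set Bc := ∑ i ∈ Finset.range (M+1), |c i| with hBcdef
    have hBc : ∀ i ≤ M, |c i| ≤ Bc := fun i hi =>
      Finset.single_le_sum (f := fun i => |c i|) (fun _ _ => abs_nonneg _)
        (Finset.mem_range.mpr (by omega))
    have hBc0 : 0 ≤ Bc := Finset.sum_nonneg fun _ _ => abs_nonneg _
    set E := C * Zp 2 + Bc * C32 with hEdef
    have hE0 : 0 ≤ E := add_nonneg (mul_nonneg hC0 Zp2_nonneg) (mul_nonneg hBc0 C32_nonneg)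
    refine ⟨C + ((M:ℝ)+1) * E, by positivity, fun i hi x hx => ?_⟩
    have hx0 : (0:ℝ) < x := lt_of_lt_of_le one_pos hx
    have hsx : (0:ℝ) < Real.sqrt x := Real.sqrt_pos.mpr hx0
    rcases Nat.lt_or_ge i (M+1) with h | h
    · refine le_trans (hC i (by omega) x hx) ?_
      exact (div_le_div_iff_of_pos_right hsx).mpr (by nlinarith [mul_nonneg (by positivity : (0:ℝ) ≤ (M:ℝ)+1) hE0])
    · have hiM : i = M + 1 := by omega
      subst hiM
      have h1 := cx_id x (M+1)
      have h2 : ((M+1 : ℕ) : ℝ) * c (M+1)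
          = ∑ j ∈ Finset.Icc 2 (M+1), c (M+1-j) * Zp j := by
        rw [hc (M+1) (by omega), ← mul_assoc, mul_one_div, div_self (by positivity), one_mul]
      have key : ((M+1 : ℕ) : ℝ) * (cx x (M+1) - c (M+1))
          = ∑ j ∈ Finset.Icc 2 (M+1),
              (cx x (M+1-j) * Ztr j x - c (M+1-j) * Zp j) := by
        rw [mul_sub, h1, h2, Finset.sum_sub_distrib]
      have hterm : ∀ j ∈ Finset.Icc 2 (M+1),
          |cx x (M+1-j) * Ztr j x - c (M+1-j) * Zp j| ≤ E / Real.sqrt x := by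
        intro j hj
        obtain ⟨hj2, hjM⟩ := Finset.mem_Icc.mp hj
        have ha : M+1-j ≤ M := by omega
        have e1 : cx x (M+1-j) * Ztr j x - c (M+1-j) * Zp j
            = (cx x (M+1-j) - c (M+1-j)) * Ztr j x
              + c (M+1-j) * (Ztr j x - Zp j) := by ring
        rw [e1]
        calc |(cx x (M+1-j) - c (M+1-j)) * Ztr j x
              + c (M+1-j) * (Ztr j x - Zp j)|
            ≤ |cx x (M+1-j) - c (M+1-j)| * |Ztr j x|
              + |c (M+1-j)| * |Ztr j x - Zp j| := by
              refine le_trans (abs_add_le _ _) ?_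
              rw [abs_mul, abs_mul]
          _ ≤ (C / Real.sqrt x) * Zp 2 + Bc * (C32 / Real.sqrt x) := by
              have hZa : |Ztr j x| = Ztr j x := abs_of_nonneg (Ztr_nonneg _ _)
              rw [hZa]
              refine add_le_add (mul_le_mul (hC _ ha x hx) (Ztr_le_Zp2 hj2 x)
                (Ztr_nonneg _ _) (by positivity)) ?_
              exact mul_le_mul (hBc _ ha) (Ztr_sub_Zp hj2 hx) (abs_nonneg _) hBc0
          _ = E / Real.sqrt x := by rw [hEdef]; ring
      have habs : ((M+1 : ℕ) : ℝ) * |cx x (M+1) - c (M+1)|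
          ≤ (M : ℝ) * (E / Real.sqrt x) := by
        rw [show ((M+1 : ℕ) : ℝ) * |cx x (M+1) - c (M+1)|
            = |((M+1 : ℕ) : ℝ) * (cx x (M+1) - c (M+1))| by
          rw [abs_mul, abs_of_nonneg (by positivity : (0:ℝ) ≤ ((M+1:ℕ):ℝ))]]
        rw [key]
        refine le_trans (Finset.abs_sum_le_sum_abs _ _) ?_
        refine le_trans (Finset.sum_le_sum hterm) ?_
        rw [Finset.sum_const, Nat.card_Icc]
        simp only [nsmul_eq_mul]
        have hcard : (M+1+1-2 : ℕ) = M := by omega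
        rw [hcard]
      have hfin : |cx x (M+1) - c (M+1)| ≤ (M:ℝ) * (E / Real.sqrt x) := by
        refine le_trans ?_ habs
        have h1le : (1:ℝ) ≤ ((M+1:ℕ):ℝ) := by exact_mod_cast Nat.succ_le_succ (Nat.zero_le M)
        nlinarith [mul_le_mul_of_nonneg_right h1le (abs_nonneg (cx x (M+1) - c (M+1)))]
      refine le_trans hfin ?_
      rw [mul_div_assoc']
      exact (div_le_div_iff_of_pos_right hsx).mpr
        (by nlinarith [mul_nonneg (Nat.cast_nonneg M : (0:ℝ) ≤ (M:ℝ)) hE0, hC0, hE0])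

lemma abs_pow_sub_pow_le (a b M : ℝ) (ha : |a| ≤ M) (hb : |b| ≤ M) :
    ∀ n : ℕ, |a ^ n - b ^ n| ≤ (n : ℝ) * M ^ (n - 1) * |a - b| := by
  intro n
  have hM0 : 0 ≤ M := le_trans (abs_nonneg a) ha
  induction n with
  | zero => simp
  | succ n IHn =>
    have e1 : a ^ (n+1) - b ^ (n+1) = a * (a ^ n - b ^ n) + (a - b) * b ^ n := by ring
    have e2 : |a ^ (n+1) - b ^ (n+1)| ≤ |a| * |a ^ n - b ^ n| + |a - b| * |b| ^ n := by
      rw [e1]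
      refine le_trans (abs_add_le _ _) ?_
      rw [abs_mul, abs_mul, abs_pow]
    rcases Nat.eq_zero_or_pos n with hn | hn
    · subst hn; simpa using e2
    · have hMn : M * M ^ (n - 1) = M ^ n := by
        rw [← pow_succ']
        congr 1
        omega
      have h1 : |a| * |a ^ n - b ^ n| ≤ M * ((n : ℝ) * M ^ (n - 1) * |a - b|) :=
        mul_le_mul ha IHn (abs_nonneg _) hM0
      have h2 : |a - b| * |b| ^ n ≤ |a - b| * M ^ n :=
        mul_le_mul_of_nonneg_left (pow_le_pow_left₀ (abs_nonneg b) hb n) (abs_nonneg _)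
      have h3 : M * ((n : ℝ) * M ^ (n - 1) * |a - b|) = (n : ℝ) * M ^ n * |a - b| := by
        rw [← hMn]; ring
      have hsucc : ((n+1 : ℕ) : ℝ) * M ^ (n + 1 - 1) * |a - b|
          = (n : ℝ) * M ^ n * |a - b| + |a - b| * M ^ n := by
        rw [Nat.add_sub_cancel]
        push_cast
        ring
      rw [hsucc]
      linarith [e2, h1, h2, h3.le, h3.ge]
end DM

theorem dissected_mertens (k : ℕ) (hk : 1 ≤ k) (c : ℕ → ℝ) (hc0 : c 0 = 1)
    (hc : ∀ m, 1 ≤ m → c m = (1 / (m : ℝ)) * ∑ j ∈ Finset.Icc 2 m, c (m - j) * Zp j)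
    (β : ℝ)
    (hβ : (fun x : ℝ => (∑ p ∈ primesUpTo x, (1 : ℝ) / p) - Real.log (Real.log x) - β)
        =O[atTop] fun x : ℝ => 1 / Real.log x) :
    (fun x : ℝ =>
        (∑' n : ℕ, if IsSmooth x n ∧ bigOmega n = k then (1 : ℝ) / n else 0)
          - ∑ j ∈ Finset.range (k + 1),
              c (k - j) / (Nat.factorial j) * (Real.log (Real.log x) + β) ^ j)
      =O[atTop] fun x : ℝ => (Real.log (Real.log x)) ^ (k - 1) / Real.log x := by
  classical
  obtain ⟨Cc, hCc0, hCc⟩ := DM.cx_c_bound c hc0 hc k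
  obtain ⟨C1, hC1pos, hC1w⟩ := hβ.exists_pos
  have hC1 := hC1w.bound
  set Bc := ∑ i ∈ Finset.range (k+1), |c i| with hBcdef
  have hBc : ∀ i ≤ k, |c i| ≤ Bc := fun i hi =>
    Finset.single_le_sum (f := fun i => |c i|) (fun _ _ => abs_nonneg _)
      (Finset.mem_range.mpr (by omega))
  have hBc0 : 0 ≤ Bc := Finset.sum_nonneg fun _ _ => abs_nonneg _
  set D := Cc * 3 ^ k + Bc * k * 3 ^ k * C1 with hDdef
  have hD0 : 0 ≤ D := by positivity
  rw [isBigO_iff]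
  refine ⟨(k + 1 : ℝ) * D, ?_⟩
  have hloglog : Tendsto (fun x : ℝ => Real.log (Real.log x)) atTop atTop :=
    Real.tendsto_log_atTop.comp Real.tendsto_log_atTop
  have ev2 : ∀ᶠ x : ℝ in atTop, max 1 (|β| + C1) ≤ Real.log (Real.log x) :=
    hloglog.eventually_ge_atTop _
  have ev3 : ∀ᶠ x : ℝ in atTop, 1 ≤ Real.log x :=
    Real.tendsto_log_atTop.eventually_ge_atTop 1
  have ev4 : ∀ᶠ x : ℝ in atTop, (1:ℝ) ≤ x := eventually_ge_atTop 1
  have ev5 : ∀ᶠ x : ℝ in atTop, (Real.log x) ^ 2 ≤ Real.sqrt x := by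
    have h := (isLittleO_log_rpow_rpow_atTop (2:ℝ) (show (0:ℝ) < 1/2 by norm_num)).bound
      one_pos
    filter_upwards [h, ev4] with x hx hx1
    have hx0 : (0:ℝ) < x := lt_of_lt_of_le one_pos hx1
    have hlog0 : 0 ≤ Real.log x := Real.log_nonneg hx1
    rw [Real.norm_eq_abs, Real.norm_eq_abs, one_mul] at hx
    calc (Real.log x) ^ 2 = Real.log x ^ (2:ℝ) := by
          rw [← Real.rpow_natCast (Real.log x) 2]; norm_num
      _ ≤ |Real.log x ^ (2:ℝ)| := le_abs_self _
      _ ≤ |x ^ (1/2 : ℝ)| := hx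
      _ = x ^ (1/2 : ℝ) := abs_of_nonneg (Real.rpow_nonneg hx0.le _)
      _ = Real.sqrt x := (Real.sqrt_eq_rpow x).symm
  filter_upwards [hC1, ev2, ev3, ev4, ev5] with x h1 h2 h3 h4 h5
  rw [DM.tsum_S x k, DM.S_eq_poly x k, Real.norm_eq_abs, Real.norm_eq_abs]
  set lx := Real.log (Real.log x) with hlx
  set L := lx + β with hL
  set P1 := Ztr 1 x with hP1def
  have hlx1 : (1:ℝ) ≤ lx := le_trans (le_max_left _ _) h2
  have hlxβ : |β| + C1 ≤ lx := le_trans (le_max_right _ _) h2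
  have hlogx0 : (0:ℝ) < Real.log x := lt_of_lt_of_le one_pos h3
  have hx0 : (0:ℝ) < x := lt_of_lt_of_le one_pos h4
  have hsx : (0:ℝ) < Real.sqrt x := Real.sqrt_pos.mpr hx0
  have hP1 : P1 = ∑ p ∈ primesUpTo x, (1 : ℝ) / p := by
    rw [hP1def, Ztr]
    refine Finset.sum_congr rfl fun p hp => ?_
    rw [Real.rpow_neg_one, one_div]
  have f1 : |P1 - L| ≤ C1 / Real.log x := by
    have hh := h1
    rw [Real.norm_eq_abs, Real.norm_eq_abs] at hh
    have e : (∑ p ∈ primesUpTo x, (1 : ℝ) / p) - Real.log (Real.log x) - β = P1 - L := by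
      rw [hP1, hL]; ring
    rw [e] at hh
    refine le_trans hh ?_
    rw [abs_of_nonneg (by positivity : (0:ℝ) ≤ 1 / Real.log x), mul_one_div]
  have hC1logx : C1 / Real.log x ≤ C1 := by
    rw [div_le_iff₀ hlogx0]
    nlinarith
  have f3 : |L| ≤ 2 * lx := by
    rw [hL]
    refine le_trans (abs_add_le _ _) ?_
    rw [abs_of_nonneg (by linarith : (0:ℝ) ≤ lx)]
    nlinarith [abs_nonneg β, hC1pos.le]
  have f3' : |L| ≤ 3 * lx := by linarith
  have f4 : |P1| ≤ 3 * lx := by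
    have habs : |P1| ≤ |L| + |P1 - L| := by
      have := abs_add_le L (P1 - L)
      simpa using this
    have h' : |P1 - L| ≤ C1 := le_trans f1 hC1logx
    nlinarith [hC1pos.le, abs_nonneg β]
  have hM1 : (1:ℝ) ≤ 3 * lx := by linarith
  have f7 : lx / Real.sqrt x ≤ 1 / Real.log x := by
    rw [div_le_div_iff₀ hsx hlogx0]
    have hlxlog : lx ≤ Real.log x := by
      rw [hlx]
      have := Real.log_le_sub_one_of_pos hlogx0
      linarith
    calc lx * Real.log x ≤ Real.log x * Real.log x :=
          mul_le_mul_of_nonneg_right hlxlog hlogx0.le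
      _ = (Real.log x) ^ 2 := by ring
      _ ≤ Real.sqrt x := h5
      _ = 1 * Real.sqrt x := (one_mul _).symm
  have hterm : ∀ j ∈ Finset.range (k+1),
      |DM.cx x (k-j) / (Nat.factorial j : ℝ) * P1 ^ j
        - c (k - j) / (Nat.factorial j : ℝ) * L ^ j|
      ≤ D * (lx ^ (k-1) / Real.log x) := by
    intro j hj
    have hjk : j ≤ k := by have := Finset.mem_range.mp hj; omega
    have hfac1 : (1:ℝ) ≤ (Nat.factorial j : ℝ) := by
      exact_mod_cast Nat.one_le_iff_ne_zero.mpr (Nat.factorial_ne_zero j)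
    have e0 : DM.cx x (k-j) / (Nat.factorial j : ℝ) * P1 ^ j
        - c (k - j) / (Nat.factorial j : ℝ) * L ^ j
        = (DM.cx x (k-j) * P1 ^ j - c (k-j) * L ^ j) / (Nat.factorial j : ℝ) := by
      ring
    rw [e0, abs_div, abs_of_nonneg (by positivity : (0:ℝ) ≤ (Nat.factorial j : ℝ))]
    refine le_trans (div_le_self (abs_nonneg _) hfac1) ?_
    have e1 : DM.cx x (k-j) * P1 ^ j - c (k-j) * L ^ j
        = (DM.cx x (k-j) - c (k-j)) * P1 ^ j + c (k-j) * (P1 ^ j - L ^ j) := by ring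
    rw [e1]
    have t1 : |(DM.cx x (k-j) - c (k-j)) * P1 ^ j| ≤ (Cc / Real.sqrt x) * (3 * lx) ^ k := by
      rw [abs_mul, abs_pow]
      refine mul_le_mul (hCc (k-j) (by omega) x h4) ?_ (by positivity) (by positivity)
      calc |P1| ^ j ≤ (3 * lx) ^ j := pow_le_pow_left₀ (abs_nonneg _) f4 j
        _ ≤ (3 * lx) ^ k := pow_le_pow_right₀ hM1 hjk
    have t2 : |c (k-j) * (P1 ^ j - L ^ j)|
        ≤ Bc * ((k : ℝ) * (3 * lx) ^ (k-1) * (C1 / Real.log x)) := by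
      rw [abs_mul]
      refine mul_le_mul (hBc (k-j) (by omega)) ?_ (abs_nonneg _) hBc0
      refine le_trans (DM.abs_pow_sub_pow_le P1 L (3*lx) f4 f3' j) ?_
      have g1 : ((j:ℝ)) ≤ (k:ℝ) := by exact_mod_cast hjk
      have g2 : (3*lx) ^ (j-1) ≤ (3*lx) ^ (k-1) := pow_le_pow_right₀ hM1 (by omega)
      have g3 : |P1 - L| ≤ C1 / Real.log x := f1
      have hp0 : (0:ℝ) ≤ (3*lx) ^ (j-1) := by positivity
      calc (j:ℝ) * (3*lx) ^ (j-1) * |P1 - L|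
          ≤ (k:ℝ) * (3*lx) ^ (k-1) * |P1 - L| := by
            refine mul_le_mul_of_nonneg_right ?_ (abs_nonneg _)
            exact mul_le_mul g1 g2 hp0 (by positivity)
        _ ≤ (k:ℝ) * (3*lx) ^ (k-1) * (C1 / Real.log x) :=
            mul_le_mul_of_nonneg_left g3 (by positivity)
    have hA : (Cc / Real.sqrt x) * (3*lx) ^ k ≤ (Cc * 3 ^ k) * (lx ^ (k-1) / Real.log x) := by
      have e : ((3:ℝ)*lx) ^ k = 3 ^ k * lx ^ k := mul_pow _ _ _
      have elx : lx ^ k = lx ^ (k-1) * lx := by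
        rw [← pow_succ]; congr 1; omega
      calc (Cc / Real.sqrt x) * (3*lx) ^ k
          = (Cc * 3 ^ k) * (lx ^ (k-1) * (lx / Real.sqrt x)) := by
            rw [e, elx]; ring
        _ ≤ (Cc * 3 ^ k) * (lx ^ (k-1) * (1 / Real.log x)) := by
            refine mul_le_mul_of_nonneg_left
              (mul_le_mul_of_nonneg_left f7 (by positivity)) (by positivity)
        _ = (Cc * 3 ^ k) * (lx ^ (k-1) / Real.log x) := by ring
    have hB : Bc * ((k : ℝ) * (3 * lx) ^ (k-1) * (C1 / Real.log x))
        ≤ (Bc * k * 3 ^ k * C1) * (lx ^ (k-1) / Real.log x) := by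
      have e : ((3:ℝ)*lx) ^ (k-1) = 3 ^ (k-1) * lx ^ (k-1) := mul_pow _ _ _
      have h3k : (3:ℝ) ^ (k-1) ≤ 3 ^ k := pow_le_pow_right₀ (by norm_num) (by omega)
      calc Bc * ((k : ℝ) * (3 * lx) ^ (k-1) * (C1 / Real.log x))
          = (Bc * (k:ℝ) * C1 * (lx ^ (k-1) / Real.log x)) * 3 ^ (k-1) := by
            rw [e]; ring
        _ ≤ (Bc * (k:ℝ) * C1 * (lx ^ (k-1) / Real.log x)) * 3 ^ k := by
            refine mul_le_mul_of_nonneg_left h3k (by positivity)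
        _ = (Bc * k * 3 ^ k * C1) * (lx ^ (k-1) / Real.log x) := by ring
    calc |(DM.cx x (k-j) - c (k-j)) * P1 ^ j + c (k-j) * (P1 ^ j - L ^ j)|
        ≤ |(DM.cx x (k-j) - c (k-j)) * P1 ^ j| + |c (k-j) * (P1 ^ j - L ^ j)| :=
          abs_add_le _ _
      _ ≤ (Cc / Real.sqrt x) * (3 * lx) ^ k
          + Bc * ((k : ℝ) * (3 * lx) ^ (k-1) * (C1 / Real.log x)) := add_le_add t1 t2
      _ ≤ (Cc * 3 ^ k) * (lx ^ (k-1) / Real.log x)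
          + (Bc * k * 3 ^ k * C1) * (lx ^ (k-1) / Real.log x) := add_le_add hA hB
      _ = D * (lx ^ (k-1) / Real.log x) := by rw [hDdef]; ring
  have hg0 : (0:ℝ) ≤ lx ^ (k-1) / Real.log x := by positivity
  calc |(∑ j ∈ Finset.range (k+1), DM.cx x (k-j) / (Nat.factorial j : ℝ) * P1 ^ j)
      - ∑ j ∈ Finset.range (k + 1), c (k - j) / (Nat.factorial j : ℝ) * L ^ j|
      = |∑ j ∈ Finset.range (k+1),
          (DM.cx x (k-j) / (Nat.factorial j : ℝ) * P1 ^ j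
            - c (k - j) / (Nat.factorial j : ℝ) * L ^ j)| := by
        rw [Finset.sum_sub_distrib]
    _ ≤ ∑ j ∈ Finset.range (k+1),
          |DM.cx x (k-j) / (Nat.factorial j : ℝ) * P1 ^ j
            - c (k - j) / (Nat.factorial j : ℝ) * L ^ j| :=
        Finset.abs_sum_le_sum_abs _ _
    _ ≤ ∑ _j ∈ Finset.range (k+1), D * (lx ^ (k-1) / Real.log x) :=
        Finset.sum_le_sum hterm
    _ = (k+1 : ℝ) * D * (lx ^ (k-1) / Real.log x) := by
        rw [Finset.sum_const, Finset.card_range]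
        push_cast
        ring
    _ ≤ (k+1 : ℝ) * D * |lx ^ (k-1) / Real.log x| := by
        rw [abs_of_nonneg hg0]
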